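/- A finite simple graph with at least two vertices is an undirected Fitch graph if and only if it is a complete multipartite graph. -/

import Mathlib

open SimpleGraph

/-- A leaf of a graph is a vertex with exactly one neighbour (i.e. a vertex of degree 1). -/
def SimpleGraph.IsLeaf {V : Type*} (T : SimpleGraph V) (v : V) : Prop :=
  ∃! u, T.Adj v u

/-- The undirected Fitch graph explained by an edge-labelled tree `(T, lam)`
(labels: `true` = 1, `false` = 0): its vertices are the leaves of `T`, and two
distinct leaves are adjacent iff the (unique) path between them in `T` contains
at least one edge labelled `1`. -/
def fitchGraph {V : Type*} (T : SimpleGraph V) (lam : Sym2 V → Bool) :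
    SimpleGraph {v : V // T.IsLeaf v} where
  Adj x y := x ≠ y ∧ ∃ p : T.Walk x.1 y.1, p.IsPath ∧ ∃ e ∈ p.edges, lam e = true
  symm := by
    constructor
    rintro x y ⟨hxy, p, hp, e, he, hl⟩
    exact ⟨hxy.symm, p.reverse, hp.reverse, e, by
      rw [SimpleGraph.Walk.edges_reverse]; exact List.mem_reverse.mpr he, hl⟩
  loopless := by constructor; rintro x ⟨hx, -⟩; exact hx rfl

/-- A graph is an undirected Fitch graph if it is isomorphic to the Fitch graph
explained by some edge-labelled finite tree. -/
def IsFitchGraph {W : Type*} (G : SimpleGraph W) : Prop :=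
  ∃ (V : Type) (T : SimpleGraph V) (lam : Sym2 V → Bool),
    Finite V ∧ T.IsTree ∧ Nonempty (G ≃g fitchGraph T lam)

/-- A graph is complete multipartite if its vertex set can be partitioned into
nonempty independent parts such that two vertices are adjacent iff they lie in
different parts. -/
def IsCompleteMultipartite' {W : Type*} (G : SimpleGraph W) : Prop :=
  ∃ P : Set (Set W), (∀ p ∈ P, p.Nonempty) ∧ (∀ x : W, ∃! p, p ∈ P ∧ x ∈ p) ∧
    ∀ x y : W, G.Adj x y ↔ ∃ p ∈ P, ∃ q ∈ P, p ≠ q ∧ x ∈ p ∧ y ∈ q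

/-! ### Auxiliary lemmas: graphs defined by a parent function with decreasing rank are trees -/

theorem iterRank {V : Type*} (parent : V → V) (rank : V → ℕ) (root : V)
    (h1 : parent root = root) (h2 : ∀ v, v ≠ root → rank (parent v) < rank v) :
    ∀ (k : ℕ) (v : V), parent^[k] v = root ∨ rank (parent^[k] v) + k ≤ rank v := by
  intro k
  induction k with
  | zero => intro v; right; simp
  | succ k ih =>
    intro v
    rcases eq_or_ne (parent^[k] v) root with hw | hw
    · left; rw [Function.iterate_succ_apply', hw, h1]
    · right
      rcases ih v with h | h
      · exact absurd h hw
      · rw [Function.iterate_succ_apply']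
        have := h2 _ hw
        omega

theorem notIterFixed {V : Type*} (parent : V → V) (rank : V → ℕ) (root : V)
    (h1 : parent root = root) (h2 : ∀ v, v ≠ root → rank (parent v) < rank v)
    {a : V} (ha : a ≠ root) (k : ℕ) : parent^[k+1] a ≠ a := by
  intro h
  rcases iterRank parent rank root h1 h2 (k+1) a with h' | h'
  · exact ha (h ▸ h')
  · rw [h] at h'; omega

theorem walkChain {V : Type*} {parent : V → V} {a : V} :
    ∀ {x y : V} (p : (SimpleGraph.fromRel (fun u v => parent u = v)).Walk x y),
      s(a, parent a) ∉ p.edges → (∃ k, parent^[k] x = a) → ∃ k, parent^[k] y = a := by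
  intro x y p
  induction p with
  | nil => exact fun _ h => h
  | @cons u v w h p ih =>
    intro he hx
    rw [SimpleGraph.Walk.edges_cons, List.mem_cons] at he
    push_neg at he
    obtain ⟨he1, he2⟩ := he
    rw [SimpleGraph.fromRel_adj] at h
    obtain ⟨k, hk⟩ := hx
    rcases h.2 with hpu | hpv
    · cases k with
      | zero =>
        exact absurd (by rw [← hk, ← hpu] at he1 ⊢; rfl : s(a, parent a) = s(u, v)) he1
      | succ k =>
        rw [Function.iterate_succ_apply, hpu] at hk
        exact ih he2 ⟨k, hk⟩
    · exact ih he2 ⟨k + 1, by rw [Function.iterate_succ_apply, hpv, hk]⟩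

theorem parentTree_isTree {V : Type*} (parent : V → V) (rank : V → ℕ) (root : V)
    (h1 : parent root = root) (h2 : ∀ v, v ≠ root → rank (parent v) < rank v) :
    (SimpleGraph.fromRel (fun u v => parent u = v)).IsTree := by
  have hpv : ∀ v, v ≠ root → parent v ≠ v := fun v hv h => by
    have := h2 v hv; rw [h] at this; omega
  have hadj : ∀ v, v ≠ root →
      (SimpleGraph.fromRel (fun u v => parent u = v)).Adj v (parent v) := fun v hv =>
    (SimpleGraph.fromRel_adj _ _ _).mpr ⟨(hpv v hv).symm, Or.inl rfl⟩
  have hbridge : ∀ a, a ≠ root →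
      (SimpleGraph.fromRel (fun u v => parent u = v)).IsBridge s(a, parent a) := by
    intro a ha
    rw [SimpleGraph.isBridge_iff_adj_and_forall_walk_mem_edges]
    refine fun p => ?_
    by_contra he
    obtain ⟨k, hk⟩ := walkChain p he ⟨0, rfl⟩
    exact notIterFixed parent rank root h1 h2 ha k (by rwa [Function.iterate_succ_apply])
  have hacyc : (SimpleGraph.fromRel (fun u v => parent u = v)).IsAcyclic := by
    rw [SimpleGraph.isAcyclic_iff_forall_adj_isBridge]
    intro v w hvw
    rw [SimpleGraph.fromRel_adj] at hvw
    obtain ⟨hne, h | h⟩ := hvw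
    · subst h
      exact hbridge v (fun hr => hne (by rw [hr, h1]))
    · subst h
      rw [Sym2.eq_swap]
      exact hbridge w (fun hr => hne (by rw [hr, h1]))
  have hreach : ∀ (n : ℕ) (v : V), rank v < n →
      (SimpleGraph.fromRel (fun u v => parent u = v)).Reachable v root := by
    intro n
    induction n with
    | zero => intro v hv; omega
    | succ n ih =>
      intro v hv
      rcases eq_or_ne v root with rfl | hv'
      · exact SimpleGraph.Reachable.refl _
      · exact (hadj v hv').reachable.trans (ih (parent v) (by have := h2 v hv'; omega))
  haveI : Nonempty V := ⟨root⟩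
  exact ⟨⟨fun u v => (hreach _ u (Nat.lt_succ_self _)).trans
    (hreach _ v (Nat.lt_succ_self _)).symm⟩, hacyc⟩

/-! ### Complete multipartite iff non-adjacency is transitive -/

theorem isCompleteMultipartite'_iff_trans {W : Type*} (G : SimpleGraph W) :
    IsCompleteMultipartite' G ↔ ∀ x y z, ¬G.Adj x y → ¬G.Adj y z → ¬G.Adj x z := by
  constructor
  · rintro ⟨P, hne, huniq, hadj⟩ x y z hxy hyz hxz
    obtain ⟨px, ⟨hpxP, hxpx⟩, hpxu⟩ := huniq x
    obtain ⟨py, ⟨hpyP, hypy⟩, hpyu⟩ := huniq y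
    obtain ⟨pz, ⟨hpzP, hzpz⟩, hpzu⟩ := huniq z
    have e1 : px = py := by
      by_contra h
      exact hxy ((hadj x y).mpr ⟨px, hpxP, py, hpyP, h, hxpx, hypy⟩)
    have e2 : py = pz := by
      by_contra h
      exact hyz ((hadj y z).mpr ⟨py, hpyP, pz, hpzP, h, hypy, hzpz⟩)
    obtain ⟨p, hpP, q, hqP, hpq, hxp, hzq⟩ := (hadj x z).mp hxz
    have h1 : p = px := hpxu p ⟨hpP, hxp⟩
    have h2 : q = pz := hpzu q ⟨hqP, hzq⟩
    exact hpq (by rw [h1, h2, e1, e2])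
  · intro htrans
    have nsym : ∀ {a b : W}, ¬G.Adj a b → ¬G.Adj b a := fun h h' => h h'.symm
    refine ⟨Set.range (fun x => {y | ¬G.Adj x y}), ?_, ?_, ?_⟩
    · rintro p ⟨x, rfl⟩; exact ⟨x, G.irrefl⟩
    · intro x
      refine ⟨{y | ¬G.Adj x y}, ⟨⟨x, rfl⟩, G.irrefl⟩, ?_⟩
      rintro p ⟨⟨z, rfl⟩, hx⟩
      have hzx : ¬G.Adj z x := hx
      ext y
      simp only [Set.mem_setOf_eq]
      exact ⟨fun hzy => htrans x z y (nsym hzx) hzy, fun hxy => htrans z x y hzx hxy⟩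
    · intro x y
      constructor
      · intro hadj
        refine ⟨{w | ¬G.Adj x w}, ⟨x, rfl⟩, {w | ¬G.Adj y w}, ⟨y, rfl⟩, ?_, G.irrefl, G.irrefl⟩
        intro h
        have : y ∈ {w | ¬G.Adj x w} := h ▸ (G.irrefl (v := y))
        exact this hadj
      · rintro ⟨p, ⟨u, rfl⟩, q, ⟨v, rfl⟩, hpq, hx, hy⟩
        by_contra hnadj
        have hux : ¬G.Adj u x := hx
        have hvy : ¬G.Adj v y := hy
        apply hpq
        ext w
        simp only [Set.mem_setOf_eq]
        have huv : ¬G.Adj u v := htrans u x v hux (htrans x y v hnadj (nsym hvy))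
        exact ⟨fun huw => htrans v u w (nsym huv) huw, fun hvw => htrans u v w huv hvw⟩

/-! ### Forward direction: in a Fitch graph non-adjacency is transitive -/

theorem fitch_nonadj_trans {V : Type*} {T : SimpleGraph V} {lam : Sym2 V → Bool}
    (htree : T.IsTree) {x y z : {v : V // T.IsLeaf v}}
    (hxy : ¬(fitchGraph T lam).Adj x y) (hyz : ¬(fitchGraph T lam).Adj y z) :
    ¬(fitchGraph T lam).Adj x z := by
  classical
  have key : ∀ {a b : {v : V // T.IsLeaf v}}, a ≠ b → ¬(fitchGraph T lam).Adj a b →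
      ∀ (p : T.Walk a.1 b.1), p.IsPath → ∀ e ∈ p.edges, lam e ≠ true :=
    fun hne hnadj p hp e he hl => hnadj ⟨hne, p, hp, e, he, hl⟩
  rcases eq_or_ne x y with rfl | hxy'
  · exact hyz
  rcases eq_or_ne y z with rfl | hyz'
  · exact hxy
  rintro ⟨hxz, p, hp, e, he, hl⟩
  obtain ⟨p1, hp1, -⟩ := htree.existsUnique_path x.1 y.1
  obtain ⟨p2, hp2, -⟩ := htree.existsUnique_path y.1 z.1
  have hpq : p = (p1.append p2).bypass :=
    (htree.existsUnique_path x.1 z.1).unique hp ((p1.append p2).bypass_isPath)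
  have hmem : e ∈ p1.edges ++ p2.edges := by
    rw [← SimpleGraph.Walk.edges_append]
    exact SimpleGraph.Walk.edges_bypass_subset _ (hpq ▸ he)
  rcases List.mem_append.mp hmem with h | h
  · exact key hxy' hxy p1 hp1 e h hl
  · exact key hyz' hyz p2 hp2 e h hl

/-! ### The star tree (for edgeless graphs) -/

def starParent (W : Type*) : Option W → Option W := fun _ => none

def starTree (W : Type*) : SimpleGraph (Option W) :=
  SimpleGraph.fromRel (fun u v => starParent W u = v)

theorem starTree_isTree (W : Type*) : (starTree W).IsTree :=
  parentTree_isTree _ (fun v => v.elim 0 fun _ => 1) none rfl (by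
    rintro (_ | x) hv
    · exact absurd rfl hv
    · simp [starParent])

theorem starTree_adj {W : Type*} {a b : Option W} :
    (starTree W).Adj a b ↔ a ≠ b ∧ ((none : Option W) = b ∨ (none : Option W) = a) :=
  SimpleGraph.fromRel_adj _ _ _

theorem starTree_isLeaf {W : Type*} (x : W) : (starTree W).IsLeaf (some x) := by
  refine ⟨none, starTree_adj.mpr ⟨Option.some_ne_none x, Or.inl rfl⟩, ?_⟩
  intro u hu
  rcases starTree_adj.mp hu with ⟨hne, h | h⟩
  · exact h.symm
  · exact absurd h.symm (Option.some_ne_none x)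

theorem starTree_not_isLeaf {W : Type*} {a b : W} (hab : a ≠ b) :
    ¬ (starTree W).IsLeaf none := by
  rintro ⟨u, -, huniq⟩
  have h1 := huniq (some a) (starTree_adj.mpr ⟨(Option.some_ne_none a).symm, Or.inr rfl⟩)
  have h2 := huniq (some b) (starTree_adj.mpr ⟨(Option.some_ne_none b).symm, Or.inr rfl⟩)
  exact hab (Option.some_injective _ (h1.trans h2.symm))

/-! ### The "spider" tree over the quotient by non-adjacency -/

def midParent {W : Type*} (s : Setoid W) :
    W ⊕ Option (Quotient s) → W ⊕ Option (Quotient s)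
  | Sum.inl x => Sum.inr (some (Quotient.mk s x))
  | Sum.inr _ => Sum.inr none

def midTree {W : Type*} (s : Setoid W) : SimpleGraph (W ⊕ Option (Quotient s)) :=
  SimpleGraph.fromRel (fun u v => midParent s u = v)

def midRank {W : Type*} (s : Setoid W) : W ⊕ Option (Quotient s) → ℕ
  | Sum.inl _ => 2
  | Sum.inr (some _) => 1
  | Sum.inr none => 0

theorem midTree_isTree {W : Type*} (s : Setoid W) : (midTree s).IsTree := by
  refine parentTree_isTree _ (midRank s) (Sum.inr none) rfl ?_
  rintro (x | o) hv
  · simp [midParent, midRank]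
  · match o with
    | none => exact absurd rfl hv
    | some q => simp [midParent, midRank]

theorem midTree_adj {W : Type*} {s : Setoid W} {a b : W ⊕ Option (Quotient s)} :
    (midTree s).Adj a b ↔ a ≠ b ∧ (midParent s a = b ∨ midParent s b = a) :=
  SimpleGraph.fromRel_adj _ _ _

theorem midTree_isLeaf {W : Type*} (s : Setoid W) (x : W) :
    (midTree s).IsLeaf (Sum.inl x) := by
  refine ⟨Sum.inr (some (Quotient.mk s x)), midTree_adj.mpr ⟨by simp, Or.inl rfl⟩, ?_⟩
  intro u hu
  rcases midTree_adj.mp hu with ⟨hne, h | h⟩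
  · exact h.symm
  · cases u with
    | inl y => exact absurd h (by simp [midParent])
    | inr o => exact absurd h (by simp [midParent])

theorem midTree_not_isLeaf_some {W : Type*} (s : Setoid W) (q : Quotient s) :
    ¬ (midTree s).IsLeaf (Sum.inr (some q)) := by
  obtain ⟨x, rfl⟩ := q.exists_rep
  rintro ⟨u, -, huniq⟩
  have h1 := huniq (Sum.inr none) (midTree_adj.mpr ⟨by simp, Or.inl rfl⟩)
  have h2 := huniq (Sum.inl x) (midTree_adj.mpr ⟨by simp, Or.inr rfl⟩)
  exact absurd (h1.trans h2.symm) (by simp)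

theorem midTree_not_isLeaf_none {W : Type*} {s : Setoid W} {q1 q2 : Quotient s}
    (h : q1 ≠ q2) : ¬ (midTree s).IsLeaf (Sum.inr none) := by
  rintro ⟨u, -, huniq⟩
  have h1 := huniq (Sum.inr (some q1)) (midTree_adj.mpr ⟨by simp, Or.inr rfl⟩)
  have h2 := huniq (Sum.inr (some q2)) (midTree_adj.mpr ⟨by simp, Or.inr rfl⟩)
  apply h
  have := h1.trans h2.symm
  simpa using this

/-! ### Backward direction -/

theorem isFitch_of_trans {W' : Type} [Fintype W'] (G : SimpleGraph W')
    (hcard : 2 ≤ Fintype.card W')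
    (htrans : ∀ x y z : W', ¬G.Adj x y → ¬G.Adj y z → ¬G.Adj x z) :
    IsFitchGraph G := by
  classical
  obtain ⟨a0, b0, hab0⟩ := Fintype.exists_pair_of_one_lt_card (α := W') (by omega)
  by_cases hE : ∃ x y, G.Adj x y
  · obtain ⟨a, b, hab⟩ := hE
    set s : Setoid W' := ⟨fun x y => ¬G.Adj x y,
      ⟨fun x => G.irrefl, fun h h' => h h'.symm, fun hxy hyz => htrans _ _ _ hxy hyz⟩⟩ with hs
    have hQ : ∀ x y : W', Quotient.mk s x = Quotient.mk s y ↔ ¬G.Adj x y := by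
      intro x y
      exact ⟨fun h => Quotient.exact h, fun h => Quotient.sound h⟩
    have hA : ∀ x : W', (midTree s).Adj (Sum.inl x) (Sum.inr (some (Quotient.mk s x))) :=
      fun x => midTree_adj.mpr ⟨by simp, Or.inl rfl⟩
    have hB : ∀ q : Quotient s, (midTree s).Adj (Sum.inr (some q)) (Sum.inr none) :=
      fun q => midTree_adj.mpr ⟨by simp, Or.inl rfl⟩
    set lam : Sym2 (W' ⊕ Option (Quotient s)) → Bool :=
      fun e => decide ((Sum.inr none : W' ⊕ Option (Quotient s)) ∈ e) with hlam
    have hinj : Function.Injective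
        (fun x : W' => (⟨Sum.inl x, midTree_isLeaf s x⟩ : {v // (midTree s).IsLeaf v})) := by
      intro x y h
      simpa using h
    have hsurj : Function.Surjective
        (fun x : W' => (⟨Sum.inl x, midTree_isLeaf s x⟩ : {v // (midTree s).IsLeaf v})) := by
      rintro ⟨v, hv⟩
      match v with
      | Sum.inl x => exact ⟨x, rfl⟩
      | Sum.inr (some q) => exact absurd hv (midTree_not_isLeaf_some s q)
      | Sum.inr none =>
        exact absurd hv (midTree_not_isLeaf_none (q1 := Quotient.mk s a)
          (q2 := Quotient.mk s b) (fun h => (hQ a b).mp h hab))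
    set f := Equiv.ofBijective _ ⟨hinj, hsurj⟩ with hf
    have hfv : ∀ x : W', ((f x : {v // (midTree s).IsLeaf v}) : W' ⊕ Option (Quotient s)) = Sum.inl x :=
      fun x => rfl
    have hiff : ∀ x y : W', (fitchGraph (midTree s) lam).Adj (f x) (f y) ↔ G.Adj x y := by
      intro x y
      constructor
      · rintro ⟨hne, p, hp, e, he, hl⟩
        by_contra hnadj
        have hxy : x ≠ y := fun h => hne (congrArg f h)
        have hq : Quotient.mk s x = Quotient.mk s y := (hQ x y).mpr hnadj
        have hB2 : (midTree s).Adj (Sum.inr (some (Quotient.mk s x))) (Sum.inl y) :=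
          midTree_adj.mpr ⟨by simp, Or.inr (by rw [hq]; rfl)⟩
        have hq2 : ((Walk.cons (hA x) (Walk.cons hB2 Walk.nil)) :
            (midTree s).Walk (Sum.inl x) (Sum.inl y)).IsPath := by
          simp [Walk.isPath_def, hxy]
        have hpeq : p = Walk.cons (hA x) (Walk.cons hB2 Walk.nil) :=
          ((midTree_isTree s).existsUnique_path _ _).unique hp hq2
        rw [hpeq] at he
        have hmem : (Sum.inr none : W' ⊕ Option (Quotient s)) ∈ e := of_decide_eq_true hl
        change e ∈ [s(Sum.inl x, Sum.inr (some (Quotient.mk s x))),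
          s(Sum.inr (some (Quotient.mk s x)), Sum.inl y)] at he
        simp only [Walk.edges_cons, Walk.edges_nil, List.mem_cons, List.not_mem_nil,
          or_false] at he
        rcases he with rfl | rfl
        · simp [Sym2.mem_iff, hfv] at hmem
        · simp [Sym2.mem_iff, hfv] at hmem
      · intro hadj
        have hxy : x ≠ y := G.ne_of_adj hadj
        have hq : Quotient.mk s x ≠ Quotient.mk s y := fun h => (hQ x y).mp h hadj
        refine ⟨f.injective.ne hxy, ?_⟩
        refine ⟨Walk.cons (hA x) (Walk.cons (hB _) (Walk.cons (hB (Quotient.mk s y)).symm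
          (Walk.cons (hA y).symm Walk.nil))), ?_, ?_⟩
        · rw [Walk.isPath_def]
          change List.Nodup [Sum.inl x, Sum.inr (some (Quotient.mk s x)), Sum.inr none,
            Sum.inr (some (Quotient.mk s y)), Sum.inl y]
          simp [Walk.isPath_def, hfv, hxy, hq, hq.symm]
        · refine ⟨s(Sum.inr (some (Quotient.mk s x)), (Sum.inr none : W' ⊕ Option (Quotient s))), ?_, ?_⟩
          · change _ ∈ [_, _, _, _]
            simp [Walk.edges_cons]
          · simp [hlam, Sym2.mem_iff]
    exact ⟨W' ⊕ Option (Quotient s), midTree s, lam, inferInstance, midTree_isTree s,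
      ⟨⟨f, hiff _ _⟩⟩⟩
  · push_neg at hE
    have hinj : Function.Injective
        (fun x : W' => (⟨some x, starTree_isLeaf x⟩ : {v // (starTree W').IsLeaf v})) := by
      intro x y h
      simpa using h
    have hsurj : Function.Surjective
        (fun x : W' => (⟨some x, starTree_isLeaf x⟩ : {v // (starTree W').IsLeaf v})) := by
      rintro ⟨v, hv⟩
      match v with
      | some x => exact ⟨x, rfl⟩
      | none => exact absurd hv (starTree_not_isLeaf hab0)
    set f := Equiv.ofBijective _ ⟨hinj, hsurj⟩ with hf
    refine ⟨Option W', starTree W', fun _ => false, inferInstance, starTree_isTree W',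
      ⟨⟨f, ?_⟩⟩⟩
    intro x y
    constructor
    · rintro ⟨-, p, -, e, -, hl⟩
      exact absurd hl (by simp)
    · intro h
      exact absurd h (hE x y)

/-- a finite simple graph with at least two vertices is an
undirected Fitch graph iff it is a complete multipartite graph. -/
theorem isFitch_iff_completeMultipartite {W : Type*} [Fintype W] (G : SimpleGraph W)
    (hW : 2 ≤ Fintype.card W) :
    IsFitchGraph G ↔ IsCompleteMultipartite' G := by
  classical
  rw [isCompleteMultipartite'_iff_trans]
  constructor
  · rintro ⟨V, T, lam, hfin, htree, ⟨f⟩⟩ x y z hxy hyz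
    rw [← f.map_rel_iff] at hxy hyz ⊢
    exact fitch_nonadj_trans htree hxy hyz
  · intro htrans
    have e : W ≃ Fin (Fintype.card W) := Fintype.equivFin W
    have iso : G ≃g G.comap (e.symm : Fin (Fintype.card W) → W) :=
      ⟨e, by intro a b; simp [SimpleGraph.comap]⟩
    have hG' : IsFitchGraph (G.comap (e.symm : Fin (Fintype.card W) → W)) :=
      isFitch_of_trans _ (by simpa using hW)
        (fun x y z hxy hyz => htrans _ _ _ hxy hyz)
    obtain ⟨V, T, lam, h1, h2, ⟨g⟩⟩ := hG'
    exact ⟨V, T, lam, h1, h2, ⟨iso.trans g⟩⟩
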